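/- Let G be a graph containing no cycle of odd length 2ℓ+1 for any ℓ with 2 ≤ ℓ ≤ k. Let v be a vertex and suppose xy is an edge of G with dist(v,x) = dist(v,y) = i where 1 ≤ i ≤ k. Then x and y have a common neighbor z with dist(v,z) = i − 1, so xyz is a triangle. -/
import Mathlib

open SimpleGraph

/-- Splitting a shortest walk at an interior vertex gives two shortest walks. -/
lemma shortest_split {V : Type*} {G : SimpleGraph V} [DecidableEq V] {v x u : V}
    (p : G.Walk v x) (hp : p.length = G.dist v x) (hu : u ∈ p.support) :
    (p.takeUntil u hu).length = G.dist v u ∧ (p.dropUntil u hu).length = G.dist u x := by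
  have h1 := SimpleGraph.dist_le (p.takeUntil u hu)
  have h2 := SimpleGraph.dist_le (p.dropUntil u hu)
  have h3 : (p.takeUntil u hu).length + (p.dropUntil u hu).length = p.length := by
    rw [← SimpleGraph.Walk.length_append, SimpleGraph.Walk.take_spec]
  obtain ⟨t, ht⟩ := (p.takeUntil u hu).reachable.exists_walk_length_eq_dist
  obtain ⟨s, hs⟩ := (p.dropUntil u hu).reachable.exists_walk_length_eq_dist
  have h4 := SimpleGraph.dist_le (t.append (p.dropUntil u hu))
  have h5 := SimpleGraph.dist_le ((p.takeUntil u hu).append s)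
  rw [SimpleGraph.Walk.length_append] at h4 h5
  omega

/-- If `G` has no cycles of odd lengths `2ℓ+1` for `2 ≤ ℓ ≤ k`, and `xy` is an edge with
both endpoints at distance `i` from `v` (`1 ≤ i ≤ k`), then `x` and `y` have a common
neighbor `z` at distance `i - 1` from `v`, so `xyz` is a triangle. -/
theorem stmt4 {V : Type*} (G : SimpleGraph V) (k : ℕ)
    (hfree : ∀ ℓ, 2 ≤ ℓ → ℓ ≤ k →
      ∀ (a : V) (w : G.Walk a a), w.IsCycle → w.length ≠ 2*ℓ+1)
    (v x y : V) (hxy : G.Adj x y) (i : ℕ) (hi1 : 1 ≤ i) (hik : i ≤ k)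
    (hx : G.dist v x = i) (hy : G.dist v y = i) :
    ∃ z : V, G.Adj x z ∧ G.Adj y z ∧ G.dist v z = i - 1 := by
  classical
  have hrx : G.Reachable v x := by
    by_contra h
    rw [SimpleGraph.dist_eq_zero_of_not_reachable h] at hx; omega
  have hry : G.Reachable v y := by
    by_contra h
    rw [SimpleGraph.dist_eq_zero_of_not_reachable h] at hy; omega
  obtain ⟨p, hp⟩ := hrx.exists_walk_length_eq_dist
  obtain ⟨q, hq⟩ := hry.exists_walk_length_eq_dist
  -- the set of common vertices of p and q
  set L : List V := p.support.filter (fun a => a ∈ q.support) with hL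
  have hvL : v ∈ L := by
    simp [hL, List.mem_filter, p.start_mem_support, q.start_mem_support]
  obtain ⟨u, huarg⟩ : ∃ u, u ∈ L.argmax (G.dist v) := by
    cases h : L.argmax (G.dist v) with
    | none => rw [List.argmax_eq_none.mp h] at hvL; simp at hvL
    | some u => exact ⟨u, rfl⟩
  have humem := List.argmax_mem huarg
  have hmax : ∀ a ∈ L, G.dist v a ≤ G.dist v u := fun a ha => List.le_of_mem_argmax ha huarg
  have hup : u ∈ p.support := (List.mem_filter.mp humem).1
  have huq : u ∈ q.support := by
    have := (List.mem_filter.mp humem).2; simpa using this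
  -- split p and q at u
  obtain ⟨hpt, hpd⟩ := shortest_split p hp hup
  obtain ⟨hqt, hqd⟩ := shortest_split q hq huq
  set j := G.dist v u with hj
  set pd := p.dropUntil u hup with hpddef
  set qd := q.dropUntil u huq with hqddef
  have hsum1 : j + G.dist u x = i := by
    have h3 : (p.takeUntil u hup).length + pd.length = p.length := by
      rw [← SimpleGraph.Walk.length_append, SimpleGraph.Walk.take_spec]
    omega
  have hsum2 : j + G.dist u y = i := by
    have h3 : (q.takeUntil u huq).length + qd.length = q.length := by
      rw [← SimpleGraph.Walk.length_append, SimpleGraph.Walk.take_spec]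
    omega
  -- internal disjointness of pd and qd
  have hdisj : ∀ w, w ∈ pd.support → w ∈ qd.support → w = u := by
    intro w hwp hwq
    have hwP : w ∈ p.support := p.support_dropUntil_subset hup hwp
    have hwQ : w ∈ q.support := q.support_dropUntil_subset huq hwq
    have hwL : w ∈ L := by simp [hL, List.mem_filter, hwP, hwQ]
    have hwle : G.dist v w ≤ j := hmax w hwL
    obtain ⟨hdt, hdd⟩ := shortest_split pd hpd hwp
    have hsplitpd : G.dist u w + G.dist w x = G.dist u x := by
      have h3 : (pd.takeUntil w hwp).length + (pd.dropUntil w hwp).length = pd.length := by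
        rw [← SimpleGraph.Walk.length_append, SimpleGraph.Walk.take_spec]
      omega
    -- lower bound on dist v w
    obtain ⟨r, hr⟩ := (p.takeUntil w hwP).reachable.exists_walk_length_eq_dist
    have h4 := SimpleGraph.dist_le (r.append (pd.dropUntil w hwp))
    rw [SimpleGraph.Walk.length_append] at h4
    have hkey : G.dist v x ≤ G.dist v w + G.dist w x := by omega
    have huw : G.dist u w = 0 := by omega
    have : (pd.takeUntil w hwp).length = 0 := by omega
    exact (SimpleGraph.Walk.eq_of_length_eq_zero this).symm
  have hxney : x ≠ y := hxy.ne
  -- u ≠ x and u ≠ y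
  have hunex : u ≠ x := by
    rintro rfl
    obtain ⟨_, hd⟩ := shortest_split q hq huq
    have h0 : (q.dropUntil u huq).length = 0 := by omega
    exact hxney (SimpleGraph.Walk.eq_of_length_eq_zero h0)
  have huney : u ≠ y := by
    rintro rfl
    obtain ⟨_, hd⟩ := shortest_split p hp hup
    have h0 : (p.dropUntil u hup).length = 0 := by omega
    exact hxney ((SimpleGraph.Walk.eq_of_length_eq_zero h0).symm)
  set ℓ := G.dist u x with hℓ
  have hℓy : G.dist u y = ℓ := by omega
  have hℓ1 : 1 ≤ ℓ := by
    rcases Nat.eq_zero_or_pos ℓ with h0 | h; swap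
    · omega
    · have h00 : pd.length = 0 := by omega
      exact absurd (SimpleGraph.Walk.eq_of_length_eq_zero h00) hunex
  -- paths
  have hpdpath : pd.IsPath := pd.isPath_of_length_eq_dist hpd
  have hqdpath : qd.IsPath := qd.isPath_of_length_eq_dist hqd
  by_cases hcase : ℓ = 1
  · -- u is the common neighbor
    refine ⟨u, ?_, ?_, ?_⟩
    · exact (SimpleGraph.Walk.adj_of_length_eq_one (by omega : pd.length = 1)).symm
    · exact (SimpleGraph.Walk.adj_of_length_eq_one (by omega : qd.length = 1)).symm
    · omega
  · -- build an odd cycle of length 2ℓ+1, contradiction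
    exfalso
    have hℓ2 : 2 ≤ ℓ := by omega
    set w : G.Walk y x := qd.reverse.append pd with hwdef
    have hwpath : w.IsPath := by
      rw [SimpleGraph.Walk.isPath_def, SimpleGraph.Walk.support_append]
      refine List.Nodup.append ?_ ?_ ?_
      · exact (SimpleGraph.Walk.isPath_def _).mp hqdpath.reverse
      · exact ((SimpleGraph.Walk.isPath_def _).mp hpdpath).sublist (List.tail_sublist _)
      · intro a ha ha'
        have haq : a ∈ qd.support := by
          rw [SimpleGraph.Walk.support_reverse] at ha
          exact List.mem_reverse.mp ha
        have hap : a ∈ pd.support := List.mem_of_mem_tail ha'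
        have hau : a = u := hdisj a hap haq
        rw [hau] at ha'
        have hc : pd.support = u :: pd.support.tail := pd.support_eq_cons
        have hnd := (SimpleGraph.Walk.isPath_def _).mp hpdpath
        rw [hc] at hnd
        exact (List.nodup_cons.mp hnd).1 ha'
    have hedge : s(x, y) ∉ w.edges := by
      intro hmem
      rw [hwdef, SimpleGraph.Walk.edges_append, List.mem_append] at hmem
      rcases hmem with h | h
      · rw [SimpleGraph.Walk.edges_reverse, List.mem_reverse] at h
        have : x ∈ qd.support := SimpleGraph.Walk.fst_mem_support_of_mem_edges qd h
        exact hunex (hdisj x pd.end_mem_support this).symm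
      · have : y ∈ pd.support := SimpleGraph.Walk.snd_mem_support_of_mem_edges pd h
        exact huney (hdisj y this qd.end_mem_support).symm
    have hcyc : (SimpleGraph.Walk.cons hxy w).IsCycle :=
      (SimpleGraph.Walk.cons_isCycle_iff w hxy).mpr ⟨hwpath, hedge⟩
    have hlen : (SimpleGraph.Walk.cons hxy w).length = 2*ℓ+1 := by
      rw [SimpleGraph.Walk.length_cons, hwdef, SimpleGraph.Walk.length_append,
        SimpleGraph.Walk.length_reverse]
      omega
    exact hfree ℓ hℓ2 (by omega) x (SimpleGraph.Walk.cons hxy w) hcyc hlen
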